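/- Let 0 < r < 1 and let a, b ∈ ℝ³ be unit vectors with -1 < ⟨a,b⟩ < 1 and 1 + ⟨a,b⟩ - 2r² ≥ 0. Then ‖Φ_r(a,b)‖ = 1, i.e. Φ_r(a,b) lies on the unit sphere. -/

import Mathlib

open scoped RealInnerProductSpace

/-- The cross product on `ℝ³` (as `EuclideanSpace ℝ (Fin 3)`). -/
noncomputable def cross3 (a b : EuclideanSpace ℝ (Fin 3)) : EuclideanSpace ℝ (Fin 3) :=
  (WithLp.equiv 2 (Fin 3 → ℝ)).symm
    ![a 1 * b 2 - a 2 * b 1, a 2 * b 0 - a 0 * b 2, a 0 * b 1 - a 1 * b 0]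

/-- The dual-edge map of the paper:
`Φ_r(a,b) = (1/(1+⟪a,b⟫))·(√((1+⟪a,b⟫-2r²)/(1-⟪a,b⟫))·(a × b) - r·(a+b))`. -/
noncomputable def Phi (r : ℝ) (a b : EuclideanSpace ℝ (Fin 3)) : EuclideanSpace ℝ (Fin 3) :=
  (1 / (1 + ⟪a, b⟫)) •
    (Real.sqrt ((1 + ⟪a, b⟫ - 2 * r ^ 2) / (1 - ⟪a, b⟫)) • cross3 a b - r • (a + b))

lemma cross3_inner_left (a b : EuclideanSpace ℝ (Fin 3)) : ⟪cross3 a b, a⟫ = 0 := by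
  simp [cross3, PiLp.inner_apply, Fin.sum_univ_three]
  ring

lemma cross3_inner_right (a b : EuclideanSpace ℝ (Fin 3)) : ⟪cross3 a b, b⟫ = 0 := by
  simp [cross3, PiLp.inner_apply, Fin.sum_univ_three]
  ring

lemma cross3_inner_left' (a b : EuclideanSpace ℝ (Fin 3)) : ⟪a, cross3 a b⟫ = 0 := by
  simp [cross3, PiLp.inner_apply, Fin.sum_univ_three]
  ring

lemma cross3_inner_right' (a b : EuclideanSpace ℝ (Fin 3)) : ⟪b, cross3 a b⟫ = 0 := by
  simp [cross3, PiLp.inner_apply, Fin.sum_univ_three]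
  ring

lemma cross3_inner_self (a b : EuclideanSpace ℝ (Fin 3)) :
    ⟪cross3 a b, cross3 a b⟫ = ⟪a, a⟫ * ⟪b, b⟫ - ⟪a, b⟫ ^ 2 := by
  simp [cross3, PiLp.inner_apply, Fin.sum_univ_three, EuclideanSpace.norm_sq_eq]
  ring

/-- `Φ_r(a,b)` lies on the unit sphere. -/
theorem stmt_13 (r : ℝ) (hr0 : 0 < r) (hr1 : r < 1)
    (a b : EuclideanSpace ℝ (Fin 3)) (ha : ‖a‖ = 1) (hb : ‖b‖ = 1)
    (h₁ : -1 < ⟪a, b⟫) (h₂ : ⟪a, b⟫ < 1) (h₃ : 0 ≤ 1 + ⟪a, b⟫ - 2 * r ^ 2) :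
    ‖Phi r a b‖ = 1 := by
  have haa : ⟪a, a⟫ = 1 := by
    rw [real_inner_self_eq_norm_sq, ha]; norm_num
  have hbb : ⟪b, b⟫ = 1 := by
    rw [real_inner_self_eq_norm_sq, hb]; norm_num
  set t := ⟪a, b⟫ with ht
  have h1t : (0:ℝ) < 1 + t := by linarith
  have h2t : (0:ℝ) < 1 - t := by linarith
  set s := Real.sqrt ((1 + t - 2 * r ^ 2) / (1 - t)) with hs
  have hs2 : s ^ 2 = (1 + t - 2 * r ^ 2) / (1 - t) := by
    rw [hs, Real.sq_sqrt (div_nonneg h₃ h2t.le)]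
  have hba : ⟪b, a⟫ = t := by rw [ht]; exact real_inner_comm a b
  have key : ⟪Phi r a b, Phi r a b⟫ = 1 := by
    rw [Phi]
    simp only [real_inner_smul_left, real_inner_smul_right, inner_sub_left, inner_sub_right,
      inner_add_left, inner_add_right, cross3_inner_left, cross3_inner_right,
      cross3_inner_self, cross3_inner_left', cross3_inner_right']
    rw [haa, hbb, ← ht, hba]
    have : (1 * 1 - t ^ 2) = (1 - t) * (1 + t) := by ring
    rw [this]
    field_simp
    have e1 : Real.sqrt (1 + t - 2 * r ^ 2) * Real.sqrt (1 + t - 2 * r ^ 2)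
        = 1 + t - 2 * r ^ 2 := Real.mul_self_sqrt h₃
    have e2 : Real.sqrt (1 - t) * Real.sqrt (1 - t) = 1 - t := Real.mul_self_sqrt h2t.le
    have hs3 : s ^ 2 * (1 - t) = 1 + t - 2 * r ^ 2 := by rw [hs2]; field_simp
    rw [← hs]
    linear_combination (1 + t) * hs3
  have hn : ‖Phi r a b‖ ^ 2 = 1 := by
    rw [← real_inner_self_eq_norm_sq, key]
  nlinarith [norm_nonneg (Phi r a b), hn]
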